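/- Let q be odd and k ≥ 1. Then (F_q[S]/(S^k))^× is the internal direct product of the subgroup H_k of even polynomials (those f with f(−S) = f(S) mod S^k) and the subgroup S¹_k of norm-one, constant-term-one elements. -/

import Mathlib

open Polynomial

set_option maxRecDepth 4000

/-- The Galois-type involution `σ : S ↦ -S` on `F_q[S]/(S^k)`. -/
noncomputable def sigmaMap (Fq : Type) [Field Fq] (k : ℕ) :
    AdjoinRoot (X ^ k : Polynomial Fq) →+* AdjoinRoot (X ^ k : Polynomial Fq) :=
  AdjoinRoot.lift (AdjoinRoot.of _) (-(AdjoinRoot.root _)) (by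
    have h : (AdjoinRoot.root (X ^ k : Polynomial Fq)) ^ k = 0 := by
      have := AdjoinRoot.eval₂_root (X ^ k : Polynomial Fq)
      simpa using this
    rw [Polynomial.eval₂_X_pow, neg_pow, h, mul_zero])

/-- Evaluation at `0` (the constant term), as a ring homomorphism `F_q[S]/(S^k) → F_q`. -/
noncomputable def ev0 (Fq : Type) [Field Fq] (k : ℕ) (hk : k ≠ 0) :
    AdjoinRoot (X ^ k : Polynomial Fq) →+* Fq :=
  AdjoinRoot.lift (RingHom.id Fq) 0 (by rw [Polynomial.eval₂_X_pow, zero_pow hk])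

section Aux
variable (Fq : Type) [Field Fq] (k : ℕ)

lemma sigma_of (a : Fq) : sigmaMap Fq k (AdjoinRoot.of _ a) = AdjoinRoot.of _ a :=
  AdjoinRoot.lift_of _

lemma sigma_mk (g : Polynomial Fq) :
    sigmaMap Fq k (AdjoinRoot.mk _ g) =
      eval₂ (AdjoinRoot.of _) (-(AdjoinRoot.root _)) g :=
  AdjoinRoot.lift_mk _ g

lemma sigma_root : sigmaMap Fq k (AdjoinRoot.root _) = -(AdjoinRoot.root _) :=
  AdjoinRoot.lift_root _

lemma sigma_sigma (x : AdjoinRoot (X ^ k : Polynomial Fq)) :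
    sigmaMap Fq k (sigmaMap Fq k x) = x := by
  induction x using AdjoinRoot.induction_on with
  | ih g =>
    rw [sigma_mk, hom_eval₂]
    have h1 : (sigmaMap Fq k).comp (AdjoinRoot.of _) = AdjoinRoot.of (X ^ k : Polynomial Fq) :=
      RingHom.ext fun a => sigma_of Fq k a
    have h2 : sigmaMap Fq k (-(AdjoinRoot.root _)) = AdjoinRoot.root (X ^ k : Polynomial Fq) := by
      rw [map_neg, sigma_root, neg_neg]
    rw [h1, h2, ← AdjoinRoot.algebraMap_eq, ← aeval_def, AdjoinRoot.aeval_eq]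

lemma ev0_of (hk : k ≠ 0) (a : Fq) : ev0 Fq k hk (AdjoinRoot.of _ a) = a :=
  AdjoinRoot.lift_of _

lemma ev0_mk (hk : k ≠ 0) (g : Polynomial Fq) :
    ev0 Fq k hk (AdjoinRoot.mk _ g) = g.eval 0 := by
  rw [show ev0 Fq k hk (AdjoinRoot.mk _ g) = eval₂ (RingHom.id Fq) 0 g from
    AdjoinRoot.lift_mk _ g]; rfl

lemma ev0_sigma (hk : k ≠ 0) (x : AdjoinRoot (X ^ k : Polynomial Fq)) :
    ev0 Fq k hk (sigmaMap Fq k x) = ev0 Fq k hk x := by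
  induction x using AdjoinRoot.induction_on with
  | ih g =>
    rw [sigma_mk, hom_eval₂, ev0_mk]
    have h1 : (ev0 Fq k hk).comp (AdjoinRoot.of _) = RingHom.id Fq :=
      RingHom.ext fun a => ev0_of Fq k hk a
    have h2 : ev0 Fq k hk (-(AdjoinRoot.root _)) = (0 : Fq) := by
      rw [map_neg, show ev0 Fq k hk (AdjoinRoot.root _) = (0:Fq) from AdjoinRoot.lift_root _,
        neg_zero]
    rw [h1, h2]; rfl

lemma ev0_nilpotent (hk : k ≠ 0) (x : AdjoinRoot (X ^ k : Polynomial Fq))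
    (hx : ev0 Fq k hk x = 0) : x ^ k = 0 := by
  induction x using AdjoinRoot.induction_on with
  | ih g =>
    rw [ev0_mk] at hx
    have h0 : g.coeff 0 = 0 := by rwa [coeff_zero_eq_eval_zero]
    obtain ⟨h, rfl⟩ := X_dvd_iff.mpr h0
    rw [← map_pow, AdjoinRoot.mk_eq_zero, mul_pow]
    exact Dvd.intro _ rfl

lemma of_injective (hk : k ≠ 0) :
    Function.Injective (AdjoinRoot.of (X ^ k : Polynomial Fq)) := by
  intro a b h
  have := congrArg (ev0 Fq k hk) h
  rwa [ev0_of, ev0_of] at this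

lemma exists_odd_exp [Fintype Fq] (hq : Odd (Fintype.card Fq)) (hk : k ≠ 0) :
    ∃ n : ℕ, Odd n ∧ ∀ u : (AdjoinRoot (X ^ k : Polynomial Fq))ˣ,
      ev0 Fq k hk (u : AdjoinRoot (X ^ k : Polynomial Fq)) = 1 → u ^ n = 1 := by
  set p := ringChar Fq with hpdef
  haveI : CharP Fq p := ringChar.charP Fq
  haveI hp : Fact p.Prime := ⟨CharP.char_is_prime Fq p⟩
  have hoddp : Odd p := by
    obtain ⟨n0, _, hcard⟩ := FiniteField.card Fq p
    rw [hcard] at hq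
    rcases Nat.even_or_odd p with he | ho
    · exact absurd hq (Nat.not_odd_iff_even.mpr (Nat.even_pow.mpr ⟨he, n0.pos.ne'⟩))
    · exact ho
  haveI : CharP (AdjoinRoot (X ^ k : Polynomial Fq)) p :=
    charP_of_injective_ringHom (of_injective Fq k hk) p
  refine ⟨p ^ k, hoddp.pow, fun u hu => ?_⟩
  have hm : ((u : AdjoinRoot (X ^ k : Polynomial Fq)) - 1) ^ k = 0 :=
    ev0_nilpotent Fq k hk _ (by rw [map_sub, map_one, hu, sub_self])
  have hle : k ≤ p ^ k := (Nat.lt_pow_self hp.out.one_lt : k < p ^ k).le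
  have hm2 : ((u : AdjoinRoot (X ^ k : Polynomial Fq)) - 1) ^ (p ^ k) = 0 := by
    rw [← Nat.sub_add_cancel hle, pow_add, hm, mul_zero]
  have hcoe : (u : AdjoinRoot (X ^ k : Polynomial Fq)) ^ (p ^ k) = 1 := by
    have h1 : (u : AdjoinRoot (X ^ k : Polynomial Fq)) =
        1 + ((u : AdjoinRoot (X ^ k : Polynomial Fq)) - 1) := by ring
    rw [h1, add_pow_char_pow, one_pow, hm2, add_zero]
  exact Units.ext (by rw [Units.val_pow_eq_pow_val, hcoe, Units.val_one])

end Aux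

/-- For `q` odd and `k ≥ 1`, `(F_q[S]/(S^k))^×` is the internal direct product of the
subgroup `H_k` of even polynomials and the subgroup `S¹_k` of norm-one,
constant-term-one elements: every unit factors uniquely as a product of one element
from each. -/
theorem stmt_6 (Fq : Type) [Field Fq] [Fintype Fq] (hq : Odd (Fintype.card Fq))
    (k : ℕ) (hk : 1 ≤ k)
    (Hev Sone : Subgroup (AdjoinRoot (X ^ k : Polynomial Fq))ˣ)
    (hHev : ∀ f : (AdjoinRoot (X ^ k : Polynomial Fq))ˣ,
      f ∈ Hev ↔ sigmaMap Fq k (f : AdjoinRoot (X ^ k : Polynomial Fq)) =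
        (f : AdjoinRoot (X ^ k : Polynomial Fq)))
    (hSone : ∀ f : (AdjoinRoot (X ^ k : Polynomial Fq))ˣ,
      f ∈ Sone ↔
        ev0 Fq k (Nat.one_le_iff_ne_zero.mp hk) (f : AdjoinRoot (X ^ k : Polynomial Fq)) = 1 ∧
        (f : AdjoinRoot (X ^ k : Polynomial Fq)) *
          sigmaMap Fq k (f : AdjoinRoot (X ^ k : Polynomial Fq)) = 1) :
    ∀ g : (AdjoinRoot (X ^ k : Polynomial Fq))ˣ,
      ∃! p : Hev × Sone, (p.1 : (AdjoinRoot (X ^ k : Polynomial Fq))ˣ) * (p.2 : (AdjoinRoot (X ^ k : Polynomial Fq))ˣ) = g := by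
  intro g
  set hk' := Nat.one_le_iff_ne_zero.mp hk with hk'def
  set A := AdjoinRoot (X ^ k : Polynomial Fq) with hA
  set e := ev0 Fq k hk' with he
  set σ := sigmaMap Fq k with hσ
  set σu : Aˣ →* Aˣ := Units.map σ.toMonoidHom with hσu
  have hσucoe : ∀ u : Aˣ, ((σu u : Aˣ) : A) = σ (u : A) := fun u => rfl
  obtain ⟨n, hnodd, hexp⟩ := exists_odd_exp Fq k hq hk'
  -- basic facts
  have hσuinv : ∀ u : Aˣ, σu (σu u) = u := fun u =>
    Units.ext (by rw [hσucoe, hσucoe, hσ, sigma_sigma])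
  have heσ : ∀ x : A, e (σ x) = e x := fun x => ev0_sigma Fq k hk' x
  have heinv : ∀ u : Aˣ, e ((u : Aˣ)⁻¹ : Aˣ) * e (u : A) = 1 := fun u => by
    rw [← map_mul, Units.inv_mul, map_one]
  -- membership characterizations at unit level
  have hHev' : ∀ u : Aˣ, u ∈ Hev ↔ σu u = u := fun u => by
    rw [hHev u, Units.ext_iff, hσucoe]
  have hSinv : ∀ u : Aˣ, u ∈ Sone → σu u = u⁻¹ := fun u hu => by
    obtain ⟨-, h2⟩ := (hSone u).mp hu
    have : u * σu u = 1 := Units.ext (by rw [Units.val_mul, hσucoe]; exact h2)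
    exact eq_inv_of_mul_eq_one_right ((mul_comm u (σu u)) ▸ this)
  -- uniqueness helper
  have key : ∀ a a' b b' : Aˣ, a ∈ Hev → a' ∈ Hev → b ∈ Sone → b' ∈ Sone →
      a * b = a' * b' → a = a' ∧ b = b' := by
    intro a a' b b' ha ha' hb hb' hab
    set t := a'⁻¹ * a with ht
    have ht2 : t = b' * b⁻¹ := by
      have h0 : t * b = (b' * b⁻¹) * b := by
        rw [ht, mul_assoc, hab, inv_mul_cancel_left, mul_assoc, inv_mul_cancel, mul_one]
      exact mul_right_cancel h0
    have hσt : σu t = t := by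
      rw [ht, map_mul, map_inv, (hHev' a).mp ha, (hHev' a').mp ha']
    have hσt' : σu t = t⁻¹ := by
      rw [ht2, map_mul, map_inv, hSinv b hb, hSinv b' hb', mul_inv_rev, inv_inv, mul_comm]
    have htt : t * t = 1 := by
      nth_rewrite 2 [← hσt]
      rw [hσt', mul_inv_cancel]
    have het : e (t : A) = 1 := by
      obtain ⟨hb1, -⟩ := (hSone b).mp hb
      obtain ⟨hb1', -⟩ := (hSone b').mp hb'
      have : e ((b⁻¹ : Aˣ) : A) = 1 := by
        have := heinv b; rwa [hb1, mul_one] at this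
      rw [ht2, Units.val_mul, map_mul, hb1', this, mul_one]
    have htn : t ^ n = 1 := hexp t het
    obtain ⟨j, hj⟩ := hnodd
    have ht1 : t = 1 := by
      have h5 : t ^ n = t := by
        rw [hj, pow_add, pow_mul, pow_two, htt, one_pow, one_mul, pow_one]
      rw [htn] at h5
      exact h5.symm
    have ha'' : a = a' := by
      have := ht1; rw [ht] at this
      exact (eq_of_inv_mul_eq_one this).symm
    refine ⟨ha'', ?_⟩
    have := ht1; rw [ht2] at this
    have hbb : b' = b := by
      have h := congrArg (· * b) this
      simpa [mul_assoc] using h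
    exact hbb.symm
  -- existence construction
  have hc : e (g : A) ≠ 0 := by
    intro h0
    have h1 := heinv g
    rw [h0, mul_zero] at h1
    exact zero_ne_one h1
  set hu : Aˣ := Units.map (AdjoinRoot.of (X ^ k : Polynomial Fq)).toMonoidHom
    (Units.mk0 (e (g : A)) hc) with hhu
  have hucoe : (hu : A) = AdjoinRoot.of _ (e (g : A)) := rfl
  have hσhu : σu hu = hu := Units.ext (by rw [hσucoe, hucoe, hσ, sigma_of])
  have hehu : e (hu : A) = e (g : A) := by rw [hucoe, he, ev0_of]
  set x : Aˣ := hu⁻¹ * g with hx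
  set v : Aˣ := x * σu x with hv
  have hex : e (x : A) = 1 := by
    have h1 : e ((hu⁻¹ : Aˣ) : A) * e (g : A) = 1 := by rw [← hehu]; exact heinv hu
    rw [hx, Units.val_mul, map_mul, h1]
  have hev : e (v : A) = 1 := by
    rw [hv, Units.val_mul, map_mul, hσucoe, heσ, hex, mul_one]
  have hσv : σu v = v := by
    rw [hv, map_mul, hσuinv, mul_comm]
  have hvn : v ^ n = 1 := hexp v hev
  obtain ⟨j, hj⟩ := hnodd
  set r : Aˣ := v ^ (j + 1) with hr
  have hr2 : r * r = v := by
    rw [hr, ← pow_add]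
    have : j + 1 + (j + 1) = n + 1 := by omega
    rw [this, pow_add, hvn, one_mul, pow_one]
  have her : e (r : A) = 1 := by
    rw [hr, Units.val_pow_eq_pow_val, map_pow, hev, one_pow]
  have hσr : σu r = r := by rw [hr, map_pow, hσv]
  set h : Aˣ := hu * r with hh
  have hσh : σu h = h := by rw [hh, map_mul, hσhu, hσr]
  have hmemH : h ∈ Hev := (hHev' h).mpr hσh
  have hh2 : h * h = g * σu g := by
    have e1 : h * h = hu * hu * (r * r) := by rw [hh, mul_mul_mul_comm]
    rw [e1, hr2, hv, hx, map_mul, map_inv, hσhu, mul_mul_mul_comm,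
      mul_inv_cancel_left, mul_inv_cancel_left]
  set s : Aˣ := h⁻¹ * g with hs
  have hhs : h * s = g := by rw [hs, mul_inv_cancel_left]
  have hes : e (s : A) = 1 := by
    have heh : e (h : A) = e (g : A) := by
      rw [hh, Units.val_mul, map_mul, hehu, her, mul_one]
    have h1 : e (s : A) * e (h : A) = e (g : A) := by
      rw [← map_mul, ← Units.val_mul, mul_comm s h, hhs]
    rw [heh] at h1
    exact mul_right_cancel₀ hc (by rw [h1, one_mul])
  have hsσ : s * σu s = 1 := by
    have hσs : σu s = h⁻¹ * σu g := by
      rw [hs, map_mul, map_inv, hσh]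
    rw [hs, hσs]
    have e2 : ∀ p q w : Aˣ, p⁻¹ * q * (p⁻¹ * w) = (p * p)⁻¹ * (q * w) := fun p q w => by
      rw [mul_inv_rev, mul_mul_mul_comm]
    rw [e2, hh2, inv_mul_cancel]
  have hmemS : s ∈ Sone := by
    rw [hSone]
    refine ⟨hes, ?_⟩
    have := congrArg (Units.val) hsσ
    rwa [Units.val_mul, hσucoe, Units.val_one] at this
  refine ⟨(⟨h, hmemH⟩, ⟨s, hmemS⟩), hhs, ?_⟩
  rintro ⟨⟨a, ha⟩, ⟨b, hb⟩⟩ hab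
  obtain ⟨h1, h2⟩ := key a h b s ha hmemH hb hmemS (by rw [hab, hhs])
  exact Prod.ext (Subtype.ext h1) (Subtype.ext h2)
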